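/- Let V be a finite-dimensional real vector space and f ∈ GL(V) unipotent, and let k(f) denote the largest integer k with (f − Id)^k ≠ 0. Suppose f preserves a closed salient convex cone C ⊂ V with nonempty interior. Then for every linear form φ : V → ℝ with φ(v) > 0 for all v ∈ C ∖ {0}, and every v in the interior of C, there exists a constant C₀ > 0 such that φ(f^n(v)) ∼ C₀ · n^{k(f)} as n → ∞ (i.e., φ(f^n(v))/n^{k(f)} → C₀). -/

import Mathlib

open Filter
open Finset

lemma aux_choose_tendsto (k m : ℕ) (h : m ≤ k) :
    Tendsto (fun n : ℕ => (n.choose m : ℝ) / (n : ℝ) ^ k) atTop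
      (nhds (if m = k then ((k.factorial : ℝ))⁻¹ else 0)) := by
  rcases eq_or_lt_of_le h with rfl | hlt
  · simp only [if_pos rfl]
    have heq : ∀ᶠ n : ℕ in atTop, ((m.factorial : ℝ))⁻¹ * ∏ i ∈ range m, (1 - (i : ℝ) / n)
        = (n.choose m : ℝ) / (n : ℝ) ^ m := by
      filter_upwards [eventually_ge_atTop (max m 1)] with n hn
      have hnm : m ≤ n := le_trans (le_max_left _ _) hn
      have hn0 : (0:ℝ) < (n:ℝ) := by
        exact_mod_cast lt_of_lt_of_le (le_max_right m 1) hn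
      have hdesc : (n.descFactorial m : ℝ) = ∏ i ∈ range m, ((n : ℝ) - i) := by
        rw [Nat.descFactorial_eq_prod_range]
        push_cast [Nat.cast_prod]
        refine Finset.prod_congr rfl fun i hi => ?_
        rw [Nat.cast_sub (le_trans (le_of_lt (mem_range.mp hi)) hnm)]
      have hch : (n.choose m : ℝ) = (∏ i ∈ range m, ((n : ℝ) - i)) / m.factorial := by
        rw [← hdesc, eq_div_iff (by exact_mod_cast m.factorial_ne_zero), mul_comm]
        exact_mod_cast (Nat.descFactorial_eq_factorial_mul_choose n m).symm
      have hfac : ∀ i ∈ range m, (1 - (i:ℝ)/n) = ((n:ℝ) - i)/n := fun i _ => by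
        field_simp
      rw [Finset.prod_congr rfl hfac, Finset.prod_div_distrib, Finset.prod_const, card_range,
        hch]
      field_simp
    refine Tendsto.congr' heq ?_
    have h1 : Tendsto (fun n : ℕ => ∏ i ∈ range m, (1 - (i : ℝ) / n)) atTop (nhds 1) := by
      have := tendsto_finset_prod (range m)
        (f := fun (i : ℕ) (n : ℕ) => (1 - (i : ℝ) / n))
        (fun i _ => (tendsto_const_nhds.sub (tendsto_const_div_atTop_nhds_zero_nat (i : ℝ))))
      simpa using this
    simpa using h1.const_mul ((m.factorial : ℝ))⁻¹
  · simp only [if_neg (Nat.ne_of_lt hlt)]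
    have hub : Tendsto (fun n : ℕ => ((n:ℝ) ^ (k - m))⁻¹) atTop (nhds 0) := by
      refine Tendsto.inv_tendsto_atTop ?_
      exact (tendsto_pow_atTop (by omega)).comp tendsto_natCast_atTop_atTop
    refine squeeze_zero (fun n => by positivity) ?_ hub
    intro n
    rcases Nat.eq_zero_or_pos n with rfl | hn
    · simp [zero_pow (by omega : k ≠ 0), zero_pow (by omega : k - m ≠ 0)]
    · have hn0 : (0:ℝ) < (n:ℝ) := by exact_mod_cast hn
      have h1 : (n.choose m : ℝ) ≤ (n:ℝ) ^ m := by exact_mod_cast Nat.choose_le_pow n m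
      have h2 : (n:ℝ) ^ k = (n:ℝ) ^ m * (n:ℝ) ^ (k - m) := by
        rw [← pow_add]; congr 1; omega
      rw [div_le_iff₀ (by positivity), h2]
      calc (n.choose m : ℝ) ≤ (n:ℝ)^m := h1
        _ = ((n:ℝ)^(k-m))⁻¹ * ((n:ℝ)^m * (n:ℝ)^(k-m)) := by
            field_simp


/-- Lemma (Birkhoff-type growth): for a unipotent `f` preserving a closed salient convex
cone `C` with nonempty interior, a linear form `φ` positive on `C \ {0}`, and `v` in the
interior of `C`, one has `φ(fⁿ v) ∼ C₀ · n^{k(f)}`. -/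
theorem stmt1 {V : Type*} [NormedAddCommGroup V] [NormedSpace ℝ V] [FiniteDimensional ℝ V]
    (f : V ≃ₗ[ℝ] V) (k : ℕ)
    (hk1 : ((f : V →ₗ[ℝ] V) - LinearMap.id) ^ k ≠ 0)
    (hk2 : ((f : V →ₗ[ℝ] V) - LinearMap.id) ^ (k + 1) = 0)
    (C : Set V) (hCc : IsClosed C) (hCconv : Convex ℝ C)
    (hCcone : ∀ a : ℝ, 0 ≤ a → ∀ x ∈ C, a • x ∈ C)
    (hCsal : C ∩ (-C) ⊆ {0})
    (hCint : (interior C).Nonempty)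
    (hfC : ∀ x ∈ C, f x ∈ C)
    (φ : V →ₗ[ℝ] ℝ) (hφ : ∀ x ∈ C, x ≠ 0 → 0 < φ x)
    (v : V) (hv : v ∈ interior C) :
    ∃ C₀ : ℝ, 0 < C₀ ∧
      Tendsto (fun n : ℕ => φ ((f ^ n) v) / (n : ℝ) ^ k) atTop (nhds C₀) := by
  set F : Module.End ℝ V := (f : V →ₗ[ℝ] V) with hFdef
  set N : Module.End ℝ V := F - 1 with hNdef
  have hid : (LinearMap.id : V →ₗ[ℝ] V) = (1 : Module.End ℝ V) := rfl
  have hN1 : N ^ k ≠ 0 := by rw [hNdef, hFdef, ← hid]; exact hk1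
  have hN2 : N ^ (k + 1) = 0 := by rw [hNdef, hFdef, ← hid]; exact hk2
  have hFN : F = 1 + N := by rw [hNdef]; abel
  have expand : ∀ n : ℕ, F ^ n = ∑ m ∈ range (k + 1), n.choose m • N ^ m := by
    intro n
    have hc : Commute N (1 : Module.End ℝ V) := Commute.one_right N
    have h1 : F ^ n = ∑ m ∈ range (n + 1), n.choose m • N ^ m := by
      rw [hFN, add_comm, hc.add_pow n]
      refine Finset.sum_congr rfl fun m _ => ?_
      rw [one_pow, mul_one, ← (Nat.cast_commute (n.choose m) (N ^ m)).eq, nsmul_eq_mul]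
    rw [h1]
    rcases le_total n k with hnk | hkn
    · apply Finset.sum_subset (by simpa using by omega : range (n+1) ⊆ range (k+1))
      intro m _ hm
      have : n < m := by simp only [mem_range] at hm; omega
      simp [Nat.choose_eq_zero_of_lt this]
    · symm
      apply Finset.sum_subset (by simpa using by omega : range (k+1) ⊆ range (n+1))
      intro m hm' hm
      have : k + 1 ≤ m := by simp only [mem_range] at hm; omega
      rw [pow_eq_zero_of_le this hN2, smul_zero]
  have apply_expand : ∀ (n : ℕ) (u : V),
      (F ^ n) u = ∑ m ∈ range (k + 1), (n.choose m : ℝ) • (N ^ m) u := by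
    intro n u
    rw [expand n]
    simp [LinearMap.sum_apply, Nat.cast_smul_eq_nsmul]
  have vect : ∀ u : V, Tendsto (fun n : ℕ => ((n : ℝ) ^ k)⁻¹ • (F ^ n) u) atTop
      (nhds ((k.factorial : ℝ)⁻¹ • (N ^ k) u)) := by
    intro u
    have heq : ∀ n : ℕ, ((n : ℝ) ^ k)⁻¹ • (F ^ n) u
        = ∑ m ∈ range (k + 1), ((n.choose m : ℝ) / (n : ℝ) ^ k) • (N ^ m) u := by
      intro n
      rw [apply_expand, Finset.smul_sum]
      exact Finset.sum_congr rfl fun m _ => by rw [smul_smul, div_eq_inv_mul]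
    simp only [heq]
    have h := tendsto_finset_sum (range (k + 1))
      (f := fun (m : ℕ) (n : ℕ) => ((n.choose m : ℝ) / (n : ℝ) ^ k) • (N ^ m) u)
      (fun m hm => (aux_choose_tendsto k m
        (by simpa [Nat.lt_succ_iff] using mem_range.mp hm)).smul_const ((N ^ m) u))
    have hsum : ∑ m ∈ range (k + 1),
        (if m = k then (k.factorial : ℝ)⁻¹ else 0) • (N ^ m) u
        = (k.factorial : ℝ)⁻¹ • (N ^ k) u := by
      simp [ite_smul, Finset.sum_ite_eq']
    rwa [hsum] at h
  have hpow : ∀ (n : ℕ) (u : V), (f ^ n) u = (F ^ n) u := by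
    intro n u
    induction n generalizing u with
    | zero => simp
    | succ n ih =>
      rw [pow_succ, pow_succ]
      show (f ^ n) (f u) = (F ^ n) (F u)
      rw [ih]
      rfl
  have hvC : v ∈ C := interior_subset hv
  have hmemC : ∀ (n : ℕ) (u : V), u ∈ C → (F ^ n) u ∈ C := by
    intro n
    induction n with
    | zero => simpa using fun u hu => hu
    | succ n ih =>
      intro u hu
      rw [pow_succ]
      show (F ^ n) (F u) ∈ C
      exact ih _ (hfC u hu)
  have NkC : ∀ u ∈ C, (N ^ k) u ∈ C := by
    intro u hu
    have hmem : ∀ᶠ n : ℕ in atTop, ((n : ℝ) ^ k)⁻¹ • (F ^ n) u ∈ C := by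
      filter_upwards [eventually_ge_atTop 1] with n hn
      have : (0:ℝ) < (n:ℝ) := by exact_mod_cast hn
      exact hCcone _ (by positivity) _ (hmemC n u hu)
    have h1 : (k.factorial : ℝ)⁻¹ • (N ^ k) u ∈ C := hCc.mem_of_tendsto (vect u) hmem
    have h2 := hCcone (k.factorial : ℝ) (by positivity) _ h1
    rwa [smul_smul, mul_inv_cancel₀ (by exact_mod_cast k.factorial_ne_zero), one_smul] at h2
  have hNkv : (N ^ k) v ≠ 0 := by
    intro h0
    obtain ⟨w, hw⟩ : ∃ w, (N ^ k) w ≠ 0 := by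
      by_contra h
      push_neg at h
      exact hN1 (LinearMap.ext h)
    obtain ⟨ε, hε, hball⟩ := Metric.isOpen_iff.mp isOpen_interior v hv
    set t : ℝ := ε / (2 * (‖w‖ + 1)) with htdef
    have hw0 : (0:ℝ) ≤ ‖w‖ := norm_nonneg w
    have ht : 0 < t := by positivity
    have htw : t * ‖w‖ < ε := by
      have h1 : t * (‖w‖ + 1) = ε / 2 := by rw [htdef]; field_simp
      nlinarith
    have hdist : ∀ s : V, ‖s‖ = t * ‖w‖ → v + s ∈ C := by
      intro s hs
      refine interior_subset (hball ?_)
      rw [Metric.mem_ball, dist_eq_norm, add_sub_cancel_left, hs]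
      exact htw
    have hmem1 : v + t • w ∈ C := hdist _ (by rw [norm_smul, Real.norm_eq_abs, abs_of_pos ht])
    have hmem2 : v + (-(t • w)) ∈ C := hdist _ (by
      rw [norm_neg, norm_smul, Real.norm_eq_abs, abs_of_pos ht])
    have e1 : (N ^ k) (v + t • w) = t • (N ^ k) w := by
      rw [map_add, map_smul, h0, zero_add]
    have e2 : (N ^ k) (v + (-(t • w))) = -(t • (N ^ k) w) := by
      rw [map_add, map_neg, map_smul, h0, zero_add]
    have m1 : t • (N ^ k) w ∈ C := e1 ▸ NkC _ hmem1
    have m2 : t • (N ^ k) w ∈ -C := by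
      rw [Set.mem_neg]
      exact e2 ▸ NkC _ hmem2
    have := hCsal ⟨m1, m2⟩
    simp only [Set.mem_singleton_iff, smul_eq_zero] at this
    rcases this with h | h
    · exact absurd h (ne_of_gt ht)
    · exact hw h
  refine ⟨(k.factorial : ℝ)⁻¹ * φ ((N ^ k) v), ?_, ?_⟩
  · have := hφ _ (NkC v hvC) hNkv
    positivity
  · have hc : Continuous φ := φ.continuous_of_finiteDimensional
    have h := (hc.tendsto _).comp (vect v)
    simp only [Function.comp_def, map_smul, smul_eq_mul] at h
    refine h.congr fun n => ?_
    rw [div_eq_inv_mul, hpow]
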